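/- Let G be a connected nontrivial simple graph with m vertices and let n ≥ 4. If min{n²·λ(G), (n−1)·(m + 2·e(G))} > 2n·δ(G) + 2n − 4, then the strong product G ⊠ K_n is super restricted edge-connected, i.e., every minimum restricted edge-cut of G ⊠ K_n isolates an edge. -/

import Mathlib

/-- The strong product of two simple graphs. -/
def strongProd {α β : Type*} (G : SimpleGraph α) (H : SimpleGraph β) :
    SimpleGraph (α × β) where
  Adj x y := (x.1 = y.1 ∧ H.Adj x.2 y.2) ∨ (x.2 = y.2 ∧ G.Adj x.1 y.1) ∨
    (G.Adj x.1 y.1 ∧ H.Adj x.2 y.2)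
  symm := by
    refine ⟨?_⟩
    rintro ⟨a₁, a₂⟩ ⟨b₁, b₂⟩ (⟨h1, h2⟩ | ⟨h1, h2⟩ | ⟨h1, h2⟩)
    · exact Or.inl ⟨h1.symm, h2.symm⟩
    · exact Or.inr (Or.inl ⟨h1.symm, h2.symm⟩)
    · exact Or.inr (Or.inr ⟨h1.symm, h2.symm⟩)
  loopless := by
    refine ⟨?_⟩
    rintro ⟨a₁, a₂⟩ (⟨_, h⟩ | ⟨_, h⟩ | ⟨h, _⟩)
    · exact H.irrefl h
    · exact G.irrefl h
    · exact G.irrefl h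

/-- The degree of a vertex. -/
noncomputable def deg {α : Type*} (G : SimpleGraph α) (v : α) : ℕ := (G.neighborSet v).ncard

/-- The minimum degree `δ(G)`. -/
noncomputable def minDeg {α : Type*} (G : SimpleGraph α) : ℕ := sInf {d | ∃ v, d = deg G v}

/-- The number of edges `e(G)`. -/
noncomputable def numEdges {α : Type*} (G : SimpleGraph α) : ℕ := G.edgeSet.ncard

/-- The minimum edge-degree `ξ(G) = min {d(u) + d(v) - 2 : uv ∈ E(G)}`. -/
noncomputable def minEdgeDeg {α : Type*} (G : SimpleGraph α) : ℕ :=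
  sInf {d | ∃ u v, G.Adj u v ∧ d = deg G u + deg G v - 2}

/-- The edge-connectivity `λ(G)`. -/
noncomputable def edgeConn {α : Type*} (G : SimpleGraph α) : ℕ :=
  sInf {k | ∃ S : Set (Sym2 α), S ⊆ G.edgeSet ∧ S.ncard = k ∧
    ¬ (G.deleteEdges S).Connected}

/-- `S` is a restricted edge-cut of `G`: deleting `S` disconnects `G` and every
component of `G - S` has at least two vertices. -/
def IsRestrictedEdgeCut {α : Type*} (G : SimpleGraph α) (S : Set (Sym2 α)) : Prop :=
  S ⊆ G.edgeSet ∧ ¬ (G.deleteEdges S).Connected ∧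
    ∀ v : α, 2 ≤ ((G.deleteEdges S).connectedComponentMk v).supp.ncard

/-- The restricted edge-connectivity `λ'(G)`. -/
noncomputable def restEdgeConn {α : Type*} (G : SimpleGraph α) : ℕ :=
  sInf {k | ∃ S : Set (Sym2 α), IsRestrictedEdgeCut G S ∧ S.ncard = k}

/-- `G` is super restricted edge-connected: every minimum restricted edge-cut
isolates an edge, i.e. some component of `G - S` has exactly two vertices. -/
def SuperRestrictedEdgeConnected {α : Type*} (G : SimpleGraph α) : Prop :=
  ∀ S : Set (Sym2 α), IsRestrictedEdgeCut G S → S.ncard = restEdgeConn G →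
    ∃ v : α, ((G.deleteEdges S).connectedComponentMk v).supp.ncard = 2

/-- The set `[X, Y]_G` of edges of `G` with one end in `X` and the other in `Y`. -/
def edgesBetween {α : Type*} (G : SimpleGraph α) (X Y : Set α) : Set (Sym2 α) :=
  {e | e ∈ G.edgeSet ∧ ∃ u ∈ X, ∃ v ∈ Y, e = s(u, v)}


open Finset

section AuxHelpers

lemma aux_walk_closed {α : Type*} {H : SimpleGraph α} {Y : Set α}
    (hY : ∀ a ∈ Y, ∀ b, H.Adj a b → b ∈ Y) {u v : α} (w : H.Walk u v) (hu : u ∈ Y) :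
    v ∈ Y := by
  revert hu
  induction w with
  | nil => exact id
  | cons h p ih => intro hu; exact ih (hY _ hu _ h)

lemma aux_not_reachable {α : Type*} {H : SimpleGraph α} {Y : Set α}
    (hY : ∀ a ∈ Y, ∀ b, H.Adj a b → b ∈ Y) {u z : α} (hu : u ∈ Y) (hz : z ∉ Y) :
    ¬ H.Reachable u z := fun h => h.elim fun w => hz (aux_walk_closed hY w hu)

lemma aux_ncard_eq_filter_card {β : Type*} [Fintype β] (P : β → Prop) [DecidablePred P] :
    {x | P x}.ncard = (univ.filter P).card := by
  rw [Set.ncard_eq_toFinset_card']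
  congr 1
  exact Set.toFinset_setOf P

lemma aux_deg_eq_degree {V : Type*} [Fintype V] (G : SimpleGraph V) [DecidableRel G.Adj] (v : V) :
    deg G v = G.degree v := by
  show (G.neighborSet v).ncard = _
  rw [Set.ncard_eq_toFinset_card', SimpleGraph.degree]
  rfl

lemma aux_minDeg_le {V : Type*} (G : SimpleGraph V) (v : V) : minDeg G ≤ deg G v :=
  Nat.sInf_le ⟨v, rfl⟩

lemma aux_exists_minDeg {V : Type*} [Nonempty V] (G : SimpleGraph V) :
    ∃ v, minDeg G = deg G v :=
  Nat.sInf_mem (s := {d | ∃ v, d = deg G v}) ⟨deg G (Classical.arbitrary V), _, rfl⟩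

/-- Edge-connectivity is at most the size of any crossing-edge cut. -/
lemma aux_edgeConn_le {V : Type*} [Fintype V] (G : SimpleGraph V) (P : V → Prop)
    (hne : ∃ a, P a) (hpr : ∃ b, ¬ P b) :
    edgeConn G ≤ {e | e ∈ G.edgeSet ∧ ∃ a b : V, e = s(a, b) ∧ P a ∧ ¬ P b}.ncard := by
  apply Nat.sInf_le
  refine ⟨_, fun e he => he.1, rfl, ?_⟩
  intro hc
  obtain ⟨a, ha⟩ := hne
  obtain ⟨b, hb⟩ := hpr
  have hreach := hc.preconnected a b
  have hcl : ∀ x ∈ {v : V | P v}, ∀ y,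
      (G.deleteEdges {e | e ∈ G.edgeSet ∧ ∃ a b : V, e = s(a, b) ∧ P a ∧ ¬ P b}).Adj x y →
      y ∈ {v : V | P v} := by
    intro x hx y hxy
    by_contra hy
    rw [SimpleGraph.deleteEdges_adj] at hxy
    exact hxy.2 ⟨(SimpleGraph.mem_edgeSet G).mpr hxy.1, x, y, rfl, hx, hy⟩
  exact aux_not_reachable hcl ha hb hreach

lemma aux_card_filter_prod {V : Type*} {β : Type*} [Fintype V] [Fintype β] [DecidableEq V]
    (P : V × β → Prop) [DecidablePred P] :
    (univ.filter P).card = ∑ x : V, (univ.filter fun b : β => P (x, b)).card := by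
  rw [Finset.card_eq_sum_card_fiberwise (f := Prod.fst) (t := univ) (fun x _ => mem_univ _)]
  refine sum_congr rfl fun x _ => ?_
  rw [Finset.filter_filter]
  apply Finset.card_bij (fun z _ => z.2)
  · rintro ⟨z1, z2⟩ hz
    simp only [mem_filter, mem_univ, true_and] at hz ⊢
    rcases hz with ⟨h1, h2⟩
    subst h2
    exact h1
  · rintro ⟨z1, z2⟩ hz ⟨w1, w2⟩ hw h
    simp only [mem_filter] at hz hw
    simp only at h
    subst h
    rw [hz.2.2, hw.2.2]
  · intro b hb
    simp only [mem_filter, mem_univ, true_and] at hb ⊢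
    exact ⟨(x, b), ⟨hb, rfl⟩, rfl⟩

/-- The Finset of ordered adjacent pairs. -/
def auxOP {V : Type*} [Fintype V] (G : SimpleGraph V) [DecidableRel G.Adj] : Finset (V × V) :=
  univ.filter fun z : V × V => G.Adj z.1 z.2

lemma aux_sum_OP {V : Type*} [Fintype V] (G : SimpleGraph V) [DecidableRel G.Adj]
    (g : V → V → ℕ) :
    ∑ z ∈ auxOP G, g z.1 z.2 = ∑ x : V, ∑ y ∈ G.neighborFinset x, g x y := by
  rw [auxOP, Finset.sum_filter, Fintype.sum_prod_type]
  refine sum_congr rfl fun x _ => ?_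
  rw [SimpleGraph.neighborFinset_eq_filter, Finset.sum_filter]

lemma aux_OP_swap {V : Type*} [Fintype V] (G : SimpleGraph V) [DecidableRel G.Adj]
    (g : V × V → ℕ) :
    ∑ z ∈ auxOP G, g z = ∑ z ∈ auxOP G, g (z.2, z.1) := by
  apply Finset.sum_nbij' (i := fun z => (z.2, z.1)) (j := fun z => (z.2, z.1)) <;>
    simp [auxOP, SimpleGraph.adj_comm]

lemma aux_numEdges_eq {V : Type*} [Fintype V] (G : SimpleGraph V) [DecidableRel G.Adj] :
    numEdges G = G.edgeFinset.card := by
  show G.edgeSet.ncard = _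
  rw [Set.ncard_eq_toFinset_card']
  congr 1

lemma aux_OP_card {V : Type*} [Fintype V] [DecidableEq V] (G : SimpleGraph V)
    [DecidableRel G.Adj] :
    (auxOP G).card = 2 * numEdges G := by
  rw [aux_numEdges_eq, ← SimpleGraph.sum_degrees_eq_twice_card_edges, auxOP,
    aux_card_filter_prod]
  refine sum_congr rfl fun x _ => ?_
  rw [SimpleGraph.degree, SimpleGraph.neighborFinset_eq_filter]

lemma aux_SP_adj {V : Type*} (G : SimpleGraph V) (n : ℕ) (u v : V × Fin n) :
    (strongProd G (SimpleGraph.completeGraph (Fin n))).Adj u v ↔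
      ((u.1 = v.1 ∧ u.2 ≠ v.2) ∨ G.Adj u.1 v.1) := by
  show ((u.1 = v.1 ∧ u.2 ≠ v.2) ∨ (u.2 = v.2 ∧ G.Adj u.1 v.1) ∨
      (G.Adj u.1 v.1 ∧ u.2 ≠ v.2)) ↔ _
  constructor
  · rintro (⟨h1, h2⟩ | ⟨h1, h2⟩ | ⟨h1, h2⟩)
    · exact Or.inl ⟨h1, h2⟩
    · exact Or.inr h2
    · exact Or.inr h1
  · rintro (⟨h1, h2⟩ | h)
    · exact Or.inl ⟨h1, h2⟩
    · by_cases h2 : u.2 = v.2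
      · exact Or.inr (Or.inl ⟨h2, h⟩)
      · exact Or.inr (Or.inr ⟨h, h2⟩)

lemma aux_SP_deg {V : Type*} [Fintype V] [DecidableEq V] (G : SimpleGraph V)
    [DecidableRel G.Adj] (n : ℕ) (x : V) (i : Fin n) :
    deg (strongProd G (SimpleGraph.completeGraph (Fin n))) (x, i) = n * G.degree x + (n - 1) := by
  classical
  have h1 : deg (strongProd G (SimpleGraph.completeGraph (Fin n))) (x, i) =
      (univ.filter fun v : V × Fin n =>
        (strongProd G (SimpleGraph.completeGraph (Fin n))).Adj (x, i) v).card := by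
    rw [← aux_ncard_eq_filter_card]
    rfl
  rw [h1, aux_card_filter_prod]
  have h2 : ∀ z : V, (univ.filter fun j : Fin n =>
      (strongProd G (SimpleGraph.completeGraph (Fin n))).Adj (x, i) (z, j)).card =
      if z = x then n - 1 else if G.Adj x z then n else 0 := by
    intro z
    by_cases hz : z = x
    · subst hz
      rw [if_pos rfl]
      have : ∀ j : Fin n, (strongProd G (SimpleGraph.completeGraph (Fin n))).Adj (z, i) (z, j) ↔ j ≠ i := by
        intro j
        rw [aux_SP_adj]
        simp [G.irrefl, ne_comm]
      rw [Finset.filter_congr fun j _ => by rw [this j]]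
      rw [Finset.filter_ne' univ i, Finset.card_erase_of_mem (mem_univ i), Finset.card_univ,
        Fintype.card_fin]
    · rw [if_neg hz]
      by_cases ha : G.Adj x z
      · rw [if_pos ha]
        have : ∀ j : Fin n, (strongProd G (SimpleGraph.completeGraph (Fin n))).Adj (x, i) (z, j) ↔ True := by
          intro j
          rw [aux_SP_adj]
          simp only [iff_true]
          exact Or.inr ha
        rw [Finset.filter_congr fun j _ => by rw [this j]]
        simp
      · rw [if_neg ha]
        have : ∀ j : Fin n, (strongProd G (SimpleGraph.completeGraph (Fin n))).Adj (x, i) (z, j) ↔ False := by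
          intro j
          rw [aux_SP_adj]
          simp only [iff_false]
          rintro (⟨h1, h2⟩ | h)
          · exact hz h1.symm
          · exact ha h
        rw [Finset.filter_congr fun j _ => by rw [this j]]
        simp
  rw [Finset.sum_congr rfl fun z _ => h2 z]
  rw [← Finset.add_sum_erase _ _ (mem_univ x), if_pos rfl]
  have h3 : ∑ z ∈ univ.erase x, (if z = x then n - 1 else if G.Adj x z then n else 0) =
      n * G.degree x := by
    rw [Finset.sum_congr rfl (fun z hz => if_neg (Finset.ne_of_mem_erase hz))]
    rw [← Finset.sum_filter]
    have h4 : (univ.erase x).filter (fun z => G.Adj x z) = G.neighborFinset x := by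
      ext z
      simp only [mem_filter, Finset.mem_erase, mem_univ, and_true, true_and,
        SimpleGraph.mem_neighborFinset]
      exact ⟨fun h => h.2, fun h => ⟨fun he => G.irrefl (he ▸ h), h⟩⟩
    rw [h4, Finset.sum_const, SimpleGraph.degree, smul_eq_mul, mul_comm]
  rw [h3, add_comm]

lemma aux_main_count {V : Type*} [Fintype V] [DecidableEq V] (G : SimpleGraph V)
    [DecidableRel G.Adj] (n : ℕ) (S : Set (Sym2 (V × Fin n))) (X : Set (V × Fin n))
    [DecidablePred (· ∈ X)]
    (hcut : ∀ u ∈ X, ∀ v, v ∉ X → (strongProd G (SimpleGraph.completeGraph (Fin n))).Adj u v →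
      s(u, v) ∈ S) :
    ∑ x : V, (univ.filter fun j : Fin n => (x, j) ∈ X).card *
      ((univ.filter fun j : Fin n => (x, j) ∉ X).card +
        ∑ y ∈ G.neighborFinset x, (univ.filter fun j : Fin n => (y, j) ∉ X).card) ≤
      S.ncard := by
  classical
  set q : V → ℕ := fun z => (univ.filter fun j : Fin n => (z, j) ∉ X).card with hq
  set A : V → Finset (V × Fin n) := (fun x => univ.filter fun u => u ∈ X ∧ u.1 = x) with hA
  set B : V → Finset (V × Fin n) :=
    (fun x => univ.filter fun v => v ∉ X ∧ (v.1 = x ∨ G.Adj x v.1)) with hB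
  set Pc : V → Finset (Sym2 (V × Fin n)) :=
    (fun x => (A x ×ˢ B x).image fun z => s(z.1, z.2)) with hP
  have hmemA : ∀ x u, u ∈ A x ↔ u ∈ X ∧ u.1 = x := by intro x u; simp [hA]
  have hmemB : ∀ x v, v ∈ B x ↔ v ∉ X ∧ (v.1 = x ∨ G.Adj x v.1) := by intro x v; simp [hB]
  have hadj : ∀ x, ∀ u ∈ A x, ∀ v ∈ B x, (strongProd G (SimpleGraph.completeGraph (Fin n))).Adj u v := by
    intro x u hu v hv
    rw [hmemA] at hu
    rw [hmemB] at hv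
    rw [aux_SP_adj]
    rcases hv.2 with h | h
    · refine Or.inl ⟨hu.2.trans h.symm, fun he => ?_⟩
      have huv : u = v := Prod.ext (hu.2.trans h.symm) he
      exact hv.1 (huv ▸ hu.1)
    · exact Or.inr (hu.2 ▸ h)
  have hcardA : ∀ x, (A x).card = (univ.filter fun j : Fin n => (x, j) ∈ X).card := by
    intro x
    apply Finset.card_bij (fun u _ => u.2)
    · rintro ⟨u1, u2⟩ hu
      rw [hmemA] at hu
      simp only [mem_filter, mem_univ, true_and]
      rcases hu with ⟨h1, h2⟩
      simp only at h2
      subst h2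
      exact h1
    · rintro ⟨u1, u2⟩ hu ⟨w1, w2⟩ hw h
      rw [hmemA] at hu hw
      simp only at h
      subst h
      simp only at hu hw
      rw [hu.2, hw.2]
    · intro j hj
      simp only [mem_filter, mem_univ, true_and] at hj
      exact ⟨(x, j), (hmemA x (x, j)).mpr ⟨hj, rfl⟩, rfl⟩
  have hcardB : ∀ x, (B x).card = q x + ∑ y ∈ G.neighborFinset x, q y := by
    intro x
    rw [hB]
    simp only
    rw [aux_card_filter_prod]
    have hz : ∀ z : V, (univ.filter fun j : Fin n =>
        ((z, j) : V × Fin n) ∉ X ∧ (z = x ∨ G.Adj x z)).card =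
        if z = x ∨ G.Adj x z then q z else 0 := by
      intro z
      by_cases h : z = x ∨ G.Adj x z
      · rw [if_pos h]
        have he : (univ.filter fun j : Fin n => ((z, j) : V × Fin n) ∉ X ∧ (z = x ∨ G.Adj x z))
            = univ.filter fun j : Fin n => ((z, j) : V × Fin n) ∉ X :=
          Finset.filter_congr fun j _ => by simp [h]
        rw [he]
      · rw [if_neg h, Finset.card_eq_zero, Finset.filter_eq_empty_iff]
        intro j _
        simp [h]
    rw [Finset.sum_congr rfl fun z _ => hz z, ← Finset.sum_filter]
    have hf : univ.filter (fun z => z = x ∨ G.Adj x z) = insert x (G.neighborFinset x) := by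
      ext z
      simp [or_comm, eq_comm]
    rw [hf, Finset.sum_insert (by simp [G.irrefl])]
  have hcardP : ∀ x, (Pc x).card = (A x).card * (B x).card := by
    intro x
    rw [hP]
    simp only
    rw [Finset.card_image_of_injOn, Finset.card_product]
    rintro ⟨u, v⟩ huv ⟨u', v'⟩ huv' he
    simp only [Finset.mem_coe, Finset.mem_product] at huv huv'
    have hu := (hmemA x u).mp huv.1
    have hv := (hmemB x v).mp huv.2
    have hu' := (hmemA x u').mp huv'.1
    have hv' := (hmemB x v').mp huv'.2
    simp only at he
    rcases Sym2.eq_iff.mp he with ⟨h1, h2⟩ | ⟨h1, h2⟩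
    · rw [Prod.mk.injEq]
      exact ⟨h1, h2⟩
    · exact absurd (h1 ▸ hu.1) hv'.1
  have hsub : ∀ x, Pc x ⊆ (Set.toFinite S).toFinset := by
    intro x e he
    rw [hP] at he
    simp only [Finset.mem_image, Finset.mem_product] at he
    obtain ⟨⟨u, v⟩, ⟨hu, hv⟩, rfl⟩ := he
    rw [Set.Finite.mem_toFinset]
    exact hcut u ((hmemA x u).mp hu).1 v ((hmemB x v).mp hv).1 (hadj x u hu v hv)
  have hdisj : ∀ x ∈ (univ : Finset V), ∀ y ∈ univ, x ≠ y → Disjoint (Pc x) (Pc y) := by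
    intro x _ y _ hxy
    rw [Finset.disjoint_left]
    intro e hex hey
    rw [hP] at hex hey
    simp only [Finset.mem_image, Finset.mem_product] at hex hey
    obtain ⟨⟨u, v⟩, ⟨hu, hv⟩, he⟩ := hex
    obtain ⟨⟨u', v'⟩, ⟨hu', hv'⟩, he'⟩ := hey
    have hu2 := (hmemA x u).mp hu
    have hv2 := (hmemB x v).mp hv
    have hu2' := (hmemA y u').mp hu'
    have hv2' := (hmemB y v').mp hv'
    rw [← he'] at he
    rcases Sym2.eq_iff.mp he with ⟨h1, h2⟩ | ⟨h1, h2⟩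
    · dsimp only at h1 h2
      exact hxy (hu2.2.symm.trans (h1 ▸ hu2'.2))
    · dsimp only at h1 h2
      exact absurd (h1 ▸ hu2.1) hv2'.1
  calc ∑ x : V, (univ.filter fun j : Fin n => (x, j) ∈ X).card *
      ((univ.filter fun j : Fin n => (x, j) ∉ X).card +
        ∑ y ∈ G.neighborFinset x, (univ.filter fun j : Fin n => (y, j) ∉ X).card)
      = ∑ x : V, (Pc x).card := by
        refine Finset.sum_congr rfl fun x _ => ?_
        rw [hcardP x, hcardA x, hcardB x]
    _ = (univ.biUnion Pc).card := (Finset.card_biUnion hdisj).symm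
    _ ≤ (Set.toFinite S).toFinset.card :=
        Finset.card_le_card (Finset.biUnion_subset.mpr fun x _ => hsub x)
    _ = S.ncard := (Set.ncard_eq_toFinset_card S (Set.toFinite S)).symm

lemma aux_supp_large {β : Type*} [Fintype β] [DecidableEq β] (Γ : SimpleGraph β)
    [DecidableRel Γ.Adj] (S : Set (Sym2 β)) (K : ℕ) (hK : 8 ≤ K)
    (hdeg : ∀ v : β, K - 1 ≤ deg Γ v) (hS : S.ncard ≤ 2 * K - 4) (w : β)
    (h3 : 3 ≤ ((Γ.deleteEdges S).connectedComponentMk w).supp.ncard) :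
    K - 2 ≤ ((Γ.deleteEdges S).connectedComponentMk w).supp.ncard := by
  classical
  by_contra hlt
  push_neg at hlt
  set H := Γ.deleteEdges S with hH
  set W := (H.connectedComponentMk w).supp with hW
  set Wf : Finset β := (Set.toFinite W).toFinset with hWf
  have hWcard : W.ncard = Wf.card := Set.ncard_eq_toFinset_card _ _
  set c := Wf.card with hc
  have hedge : ∀ v ∈ W, ∀ b, b ∉ W → Γ.Adj v b → s(v, b) ∈ S := by
    intro v hv b hb hadj
    by_contra hs
    have hHadj : H.Adj v b := by rw [hH, SimpleGraph.deleteEdges_adj]; exact ⟨hadj, hs⟩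
    apply hb
    rw [hW, SimpleGraph.ConnectedComponent.mem_supp_iff] at hv ⊢
    rw [← hv]
    exact SimpleGraph.ConnectedComponent.eq.mpr hHadj.symm.reachable
  set E : β → Finset (Sym2 β) := (fun v => (Set.toFinite S).toFinset.filter
      fun e => ∃ b, e = s(v, b) ∧ b ∉ W) with hE
  have hdisj : ∀ x ∈ Wf, ∀ y ∈ Wf, x ≠ y → Disjoint (E x) (E y) := by
    intro x hx y hy hxy
    rw [Finset.disjoint_left]
    intro e hex hey
    rw [hE] at hex hey
    simp only [Finset.mem_filter] at hex hey
    obtain ⟨-, b, rfl, hb⟩ := hex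
    obtain ⟨-, b', heq, hb'⟩ := hey
    rw [Set.Finite.mem_toFinset] at hx hy
    rcases Sym2.eq_iff.mp heq with ⟨h1, h2⟩ | ⟨h1, h2⟩
    · exact hxy h1
    · exact hb' (h1 ▸ hx)
  have hcard : ∀ v ∈ Wf, deg Γ v - (c - 1) ≤ (E v).card := by
    intro v hv
    rw [Set.Finite.mem_toFinset] at hv
    have hinj : (univ.filter fun b => Γ.Adj v b ∧ b ∉ W).card ≤ (E v).card := by
      apply Finset.card_le_card_of_injOn (fun b => s(v, b))
      · intro b hb
        simp only [Finset.mem_coe, mem_filter, mem_univ, true_and] at hb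
        rw [hE]
        simp only [Finset.mem_coe, Finset.mem_filter, Set.Finite.mem_toFinset]
        exact ⟨hedge v hv b hb.2 hb.1, b, rfl, hb.2⟩
      · intro b hb b' hb' heq
        simp only [Finset.mem_coe, mem_filter, mem_univ, true_and] at hb hb'
        rcases Sym2.eq_iff.mp heq with ⟨-, h2⟩ | ⟨h1, h2⟩
        · exact h2
        · exact absurd (h1 ▸ hv) hb'.2
    refine le_trans ?_ hinj
    have hdegv : deg Γ v = (univ.filter fun b => Γ.Adj v b).card := by
      rw [aux_deg_eq_degree, SimpleGraph.degree, SimpleGraph.neighborFinset_eq_filter]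
    have hff : (univ.filter fun b => Γ.Adj v b ∧ b ∉ W) =
        (univ.filter fun b => Γ.Adj v b).filter (fun b => b ∉ W) := by
      rw [Finset.filter_filter]
    have hsplit : ((univ.filter fun b => Γ.Adj v b).filter (fun b => b ∈ W)).card +
        ((univ.filter fun b => Γ.Adj v b).filter (fun b => b ∉ W)).card =
        (univ.filter fun b => Γ.Adj v b).card :=
      Finset.card_filter_add_card_filter_not _
    have hWle : ((univ.filter fun b => Γ.Adj v b).filter (fun b => b ∈ W)).card ≤ c - 1 := by
      have hsub : ((univ.filter fun b => Γ.Adj v b).filter (fun b => b ∈ W)) ⊆ Wf.erase v := by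
        intro b hb
        simp only [Finset.mem_filter, mem_univ, true_and] at hb
        rw [Finset.mem_erase, Set.Finite.mem_toFinset]
        exact ⟨hb.1.ne', hb.2⟩
      calc _ ≤ (Wf.erase v).card := Finset.card_le_card hsub
        _ = c - 1 := by rw [Finset.card_erase_of_mem (Set.Finite.mem_toFinset _ |>.mpr hv)]
    rw [hff, hdegv]
    omega
  have hsum : ∑ v ∈ Wf, (deg Γ v - (c - 1)) ≤ S.ncard := by
    calc ∑ v ∈ Wf, (deg Γ v - (c - 1)) ≤ ∑ v ∈ Wf, (E v).card := Finset.sum_le_sum hcard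
      _ = (Wf.biUnion E).card := (Finset.card_biUnion hdisj).symm
      _ ≤ (Set.toFinite S).toFinset.card := Finset.card_le_card (Finset.biUnion_subset.mpr
          fun v _ => Finset.filter_subset _ _)
      _ = S.ncard := (Set.ncard_eq_toFinset_card S (Set.toFinite S)).symm
  have hterm : ∀ v ∈ Wf, K - c ≤ deg Γ v - (c - 1) := by
    intro v _
    have := hdeg v
    omega
  have hprod : c * (K - c) ≤ S.ncard := by
    calc c * (K - c) = Wf.card • (K - c) := by rw [smul_eq_mul, hc]
      _ ≤ ∑ v ∈ Wf, (deg Γ v - (c - 1)) := Finset.card_nsmul_le_sum _ _ _ hterm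
      _ ≤ S.ncard := hsum
  have h3c : 3 ≤ c := by rw [hWcard] at h3; exact h3
  have hcK : c ≤ K - 3 := by rw [hWcard] at hlt; omega
  set a := c - 2 with ha
  set r := K - c with hr
  set b := r - 2 with hb
  have hab : c * r = a * b + 2 * a + 2 * b + 4 := by
    have hca : c = a + 2 := by omega
    have hrb : r = b + 2 := by omega
    rw [hca, hrb]
    ring
  have hab1 : 1 ≤ a * b := by
    have h1 : 1 ≤ a := by omega
    have h2 : 1 ≤ b := by omega
    exact Nat.one_le_iff_ne_zero.mpr (Nat.mul_ne_zero (by omega) (by omega))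
  omega

lemma aux_split {V : Type*} [Fintype V] [DecidableEq V] (G : SimpleGraph V)
    [DecidableRel G.Adj] (n : ℕ) (hn : 4 ≤ n) (r : V → ℕ)
    (h1 : ∀ x, 1 ≤ r x) (h2 : ∀ x, r x ≤ n - 1) :
    (n - 1) * (Fintype.card V + 2 * numEdges G) ≤
      ∑ x : V, r x * ((n - r x) + ∑ y ∈ G.neighborFinset x, (n - r y)) := by
  have h1n : 1 ≤ n := by omega
  have hper : ∀ x : V, n - 1 ≤ r x * (n - r x) := by
    intro x
    have ha := h1 x
    have hb : r x + 1 ≤ n := by have := h2 x; omega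
    have hrn : r x ≤ n := by omega
    zify [hrn, h1n]
    have ha' : (1 : ℤ) ≤ (r x : ℤ) := by exact_mod_cast ha
    have hb' : (r x : ℤ) + 1 ≤ (n : ℤ) := by exact_mod_cast hb
    nlinarith [mul_nonneg (by linarith : (0:ℤ) ≤ (r x : ℤ) - 1)
      (by linarith : (0:ℤ) ≤ (n : ℤ) - (r x : ℤ) - 1)]
  have hEpair : ∀ x y : V, 2 * (n - 1) ≤ r x * (n - r y) + r y * (n - r x) := by
    intro x y
    have hx1 := h1 x
    have hy1 := h1 y
    have hx2 := h2 x
    have hy2 := h2 y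
    have hxn : r x ≤ n := by omega
    have hyn : r y ≤ n := by omega
    have hx' : r x + 1 ≤ n := by omega
    have hy' : r y + 1 ≤ n := by omega
    zify [hxn, hyn, h1n]
    have ha1 : (1 : ℤ) ≤ (r x : ℤ) := by exact_mod_cast hx1
    have hb1 : (1 : ℤ) ≤ (r y : ℤ) := by exact_mod_cast hy1
    have ha2 : (r x : ℤ) + 1 ≤ (n : ℤ) := by exact_mod_cast hx'
    have hb2 : (r y : ℤ) + 1 ≤ (n : ℤ) := by exact_mod_cast hy'
    nlinarith [mul_nonneg (by linarith : (0:ℤ) ≤ (r x : ℤ) - 1)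
      (by linarith : (0:ℤ) ≤ (n : ℤ) - (r y : ℤ) - 1),
      mul_nonneg (by linarith : (0:ℤ) ≤ (r y : ℤ) - 1)
      (by linarith : (0:ℤ) ≤ (n : ℤ) - (r x : ℤ) - 1)]
  have hsum2 : ∑ x : V, ∑ y ∈ G.neighborFinset x, r x * (n - r y) =
      ∑ z ∈ auxOP G, r z.1 * (n - r z.2) := (aux_sum_OP G _).symm
  have hswap : ∑ z ∈ auxOP G, r z.1 * (n - r z.2) = ∑ z ∈ auxOP G, r z.2 * (n - r z.1) :=
    aux_OP_swap G _
  have hedge : 2 * ((n - 1) * (2 * numEdges G)) ≤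
      2 * ∑ z ∈ auxOP G, r z.1 * (n - r z.2) := by
    calc 2 * ((n - 1) * (2 * numEdges G)) = (auxOP G).card * (2 * (n - 1)) := by
          rw [aux_OP_card]; ring
      _ = ∑ _z ∈ auxOP G, 2 * (n - 1) := by rw [Finset.sum_const, smul_eq_mul]
      _ ≤ ∑ z ∈ auxOP G, (r z.1 * (n - r z.2) + r z.2 * (n - r z.1)) :=
          Finset.sum_le_sum fun z _ => hEpair z.1 z.2
      _ = 2 * ∑ z ∈ auxOP G, r z.1 * (n - r z.2) := by
          rw [Finset.sum_add_distrib, ← hswap]; ring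
  have hedge' : (n - 1) * (2 * numEdges G) ≤ ∑ z ∈ auxOP G, r z.1 * (n - r z.2) := by omega
  calc (n - 1) * (Fintype.card V + 2 * numEdges G)
      = (n - 1) * Fintype.card V + (n - 1) * (2 * numEdges G) := by ring
    _ ≤ (∑ x : V, r x * (n - r x)) + ∑ z ∈ auxOP G, r z.1 * (n - r z.2) := by
        refine Nat.add_le_add ?_ hedge'
        calc (n - 1) * Fintype.card V = ∑ _x : V, (n - 1) := by
              rw [Finset.sum_const, smul_eq_mul, Finset.card_univ]; ring
          _ ≤ ∑ x : V, r x * (n - r x) := Finset.sum_le_sum fun x _ => hper x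
    _ = ∑ x : V, r x * ((n - r x) + ∑ y ∈ G.neighborFinset x, (n - r y)) := by
        rw [← hsum2, ← Finset.sum_add_distrib]
        refine Finset.sum_congr rfl fun x _ => ?_
        rw [mul_add, Finset.mul_sum]

lemma aux_side {V : Type*} [Fintype V] [DecidableEq V] (G : SimpleGraph V)
    [DecidableRel G.Adj] (hG : G.Connected) (n : ℕ) (hn : 4 ≤ n) (hd : 1 ≤ minDeg G)
    (r : V → ℕ) (hrn : ∀ x, r x < n) (hx0 : ∃ x, r x = 0)
    (hsum : n * (minDeg G + 1) - 2 ≤ ∑ x, r x) :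
    2 * n * minDeg G + 2 * n - 4 <
      ∑ x : V, r x * ((n - r x) + ∑ y ∈ G.neighborFinset x, (n - r y)) := by
  set δ := minDeg G with hδ
  have hdegδ : ∀ x, δ ≤ G.degree x := fun x => by
    rw [← aux_deg_eq_degree]; exact aux_minDeg_le G x
  have hbr : ∀ x, δ + 1 ≤ (n - r x) + ∑ y ∈ G.neighborFinset x, (n - r y) := by
    intro x
    have h1 : 1 ≤ n - r x := by have := hrn x; omega
    have h2 : G.degree x ≤ ∑ y ∈ G.neighborFinset x, (n - r y) := by
      rw [SimpleGraph.degree]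
      calc (G.neighborFinset x).card = ∑ _y ∈ G.neighborFinset x, 1 := by
            rw [Finset.sum_const, smul_eq_mul, mul_one]
        _ ≤ _ := Finset.sum_le_sum fun y _ => by have := hrn y; omega
    have := hdegδ x
    omega
  -- boundary edge
  obtain ⟨x0, hx0⟩ := hx0
  have hx1 : ∃ x1, 1 ≤ r x1 := by
    by_contra hno
    push_neg at hno
    have : ∑ x, r x = 0 := Finset.sum_eq_zero fun x _ => by have := hno x; omega
    have h8 : 8 ≤ n * (δ + 1) := by
      calc 8 = 4 * 2 := rfl
        _ ≤ n * (δ + 1) := Nat.mul_le_mul hn (by omega)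
    omega
  obtain ⟨x1, hx1⟩ := hx1
  have hbd : ∃ a, 1 ≤ r a ∧ ∃ b, G.Adj a b ∧ r b = 0 := by
    by_contra hno
    push_neg at hno
    have hcl : ∀ p ∈ {x : V | 1 ≤ r x}, ∀ q, G.Adj p q → q ∈ {x : V | 1 ≤ r x} := by
      intro p hp q hpq
      by_contra hq
      simp only [Set.mem_setOf_eq, not_le, Nat.lt_one_iff] at hq
      exact absurd hq (hno p hp q hpq)
    have := aux_walk_closed hcl ((hG.preconnected x1 x0).some) hx1
    simp only [Set.mem_setOf_eq] at this
    omega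
  obtain ⟨a, hra, b, hab, hrb⟩ := hbd
  have hbrA : δ + 1 + (n - 1) ≤ (n - r a) + ∑ y ∈ G.neighborFinset a, (n - r y) := by
    have hbmem : b ∈ G.neighborFinset a := by rw [SimpleGraph.mem_neighborFinset]; exact hab
    have h1 : 1 ≤ n - r a := by have := hrn a; omega
    have hsplit : ∑ y ∈ G.neighborFinset a, (n - r y) =
        (n - r b) + ∑ y ∈ (G.neighborFinset a).erase b, (n - r y) :=
      (Finset.add_sum_erase _ _ hbmem).symm
    have h2 : (G.degree a) - 1 ≤ ∑ y ∈ (G.neighborFinset a).erase b, (n - r y) := by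
      calc G.degree a - 1 = ((G.neighborFinset a).erase b).card := by
            rw [Finset.card_erase_of_mem hbmem, SimpleGraph.degree]
        _ = ∑ _y ∈ (G.neighborFinset a).erase b, 1 := by
            rw [Finset.sum_const, smul_eq_mul, mul_one]
        _ ≤ _ := Finset.sum_le_sum fun y _ => by have := hrn y; omega
    have h3 : n - r b = n := by rw [hrb]; exact Nat.sub_zero n
    have h4 := hdegδ a
    omega
  -- assemble
  have hF : (δ + 1) * (∑ x, r x) + (n - 1) * r a ≤
      ∑ x : V, r x * ((n - r x) + ∑ y ∈ G.neighborFinset x, (n - r y)) := by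
    have hstep : ∀ x ∈ (univ : Finset V),
        r x * (δ + 1) + (if x = a then (n - 1) * r x else 0) ≤
        r x * ((n - r x) + ∑ y ∈ G.neighborFinset x, (n - r y)) := by
      intro x _
      by_cases hxa : x = a
      · subst hxa
        rw [if_pos rfl]
        calc r x * (δ + 1) + (n - 1) * r x = r x * ((δ + 1) + (n - 1)) := by ring
          _ ≤ _ := Nat.mul_le_mul_left _ hbrA
      · rw [if_neg hxa, Nat.add_zero]
        exact Nat.mul_le_mul_left _ (hbr x)
    calc (δ + 1) * (∑ x, r x) + (n - 1) * r a
        = ∑ x : V, (r x * (δ + 1) + (if x = a then (n - 1) * r x else 0)) := by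
          have e1 : ∑ x : V, r x * (δ + 1) = (δ + 1) * ∑ x : V, r x := by
            rw [← Finset.sum_mul, mul_comm]
          have e2 : ∑ x : V, (if x = a then (n - 1) * r x else 0) = (n - 1) * r a := by
            rw [Finset.sum_ite_eq' univ a (fun x => (n - 1) * r x), if_pos (mem_univ a)]
          rw [Finset.sum_add_distrib, e1, e2]
      _ ≤ _ := Finset.sum_le_sum hstep
  have hfin : 2 * n * δ + 2 * n - 4 < (δ + 1) * (n * (δ + 1) - 2) + (n - 1) * 1 := by
    have h2n : 2 ≤ n * (δ + 1) := by
      calc 2 ≤ 4 := by omega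
        _ ≤ n := hn
        _ ≤ n * (δ + 1) := Nat.le_mul_of_pos_right n (by omega)
    have h4n : 4 ≤ 2 * n * δ + 2 * n := by nlinarith [hn, hd]
    have h1n : 1 ≤ n := by omega
    zify [h2n, h4n, h1n]
    have hd' : (1 : ℤ) ≤ δ := by exact_mod_cast hd
    have hn' : (4 : ℤ) ≤ n := by exact_mod_cast hn
    have hδ2 : (δ:ℤ) ≤ (δ:ℤ) * (δ:ℤ) := by nlinarith [hd']
    nlinarith [hd', hn', hδ2, mul_nonneg (by linarith : (0:ℤ) ≤ (n:ℤ) - 4)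
      (mul_self_nonneg (δ:ℤ))]
  have hend : (δ + 1) * (n * (δ + 1) - 2) + (n - 1) * 1 ≤
      (δ + 1) * (∑ x, r x) + (n - 1) * r a :=
    Nat.add_le_add (Nat.mul_le_mul_left _ hsum) (Nat.mul_le_mul_left _ hra)
  omega

lemma aux_threshold {V : Type*} [Fintype V] [DecidableEq V] (G : SimpleGraph V)
    [DecidableRel G.Adj] (n : ℕ) (hn : 4 ≤ n) (p : V → ℕ) (hpn : ∀ x, p x ≤ n)
    (hA : ∃ x, p x = n) (hB : ∃ x, p x = 0) :
    n ^ 2 * edgeConn G ≤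
      ∑ x : V, p x * ((n - p x) + ∑ y ∈ G.neighborFinset x, (n - p y)) := by
  classical
  set c : ℕ → ℕ := (fun t => ((auxOP G).filter fun z => t ≤ p z.1 ∧ p z.2 < t).card) with hc
  have hcut : ∀ t ∈ Finset.Icc 1 n, edgeConn G ≤ c t := by
    intro t ht
    rw [Finset.mem_Icc] at ht
    obtain ⟨xA, hxA⟩ := hA
    obtain ⟨xB, hxB⟩ := hB
    have h1 := aux_edgeConn_le G (fun x => t ≤ p x) ⟨xA, by omega⟩ ⟨xB, by omega⟩
    refine h1.trans ?_
    rw [Set.ncard_eq_toFinset_card _ (Set.toFinite _)]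
    apply Finset.card_le_card_of_surjOn (fun z : V × V => s(z.1, z.2))
    intro e he
    simp only [Finset.coe_sort_coe, Finset.mem_coe, Set.Finite.mem_toFinset] at he
    obtain ⟨hee, a, b, rfl, hta, htb⟩ := he
    refine ⟨(a, b), ?_, rfl⟩
    rw [Finset.mem_coe, Finset.mem_filter]
    have htb' : p b < t := by omega
    refine ⟨?_, hta, htb'⟩
    rw [auxOP, Finset.mem_filter]
    exact ⟨mem_univ _, (SimpleGraph.mem_edgeSet G).mp hee⟩
  obtain ⟨t0, ht0, hmin⟩ := Finset.exists_min_image (Finset.Icc 1 n) c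
    ⟨1, Finset.mem_Icc.mpr ⟨le_refl 1, by omega⟩⟩
  have hIcc : (Finset.Icc 1 n).card = n := by rw [Nat.card_Icc]; omega
  have h4 : n * c t0 ≤ ∑ t ∈ Finset.Icc 1 n, c t := by
    calc n * c t0 = (Finset.Icc 1 n).card • c t0 := by rw [hIcc, smul_eq_mul]
      _ ≤ _ := Finset.card_nsmul_le_sum _ _ _ (fun t ht => hmin t ht)
  have h2 : ∑ t ∈ Finset.Icc 1 n, c t = ∑ z ∈ auxOP G, (p z.1 - p z.2) := by
    have hcf : ∀ t, c t = ∑ z ∈ auxOP G, (if t ≤ p z.1 ∧ p z.2 < t then 1 else 0) := by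
      intro t
      rw [hc]
      simp only
      rw [Finset.card_filter]
    rw [Finset.sum_congr rfl fun t _ => hcf t, Finset.sum_comm]
    refine Finset.sum_congr rfl fun z _ => ?_
    rw [← Finset.card_filter]
    have hfe : (Finset.Icc 1 n).filter (fun t => t ≤ p z.1 ∧ p z.2 < t) =
        Finset.Icc (p z.2 + 1) (p z.1) := by
      ext t
      simp only [Finset.mem_filter, Finset.mem_Icc]
      have := hpn z.1
      omega
    rw [hfe, Nat.card_Icc]
    omega
  have hpair : ∀ z : V × V, n * (p z.1 - p z.2) + n * (p z.2 - p z.1) ≤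
      p z.1 * (n - p z.2) + p z.2 * (n - p z.1) := by
    intro z
    have ha := hpn z.1
    have hb := hpn z.2
    rcases le_total (p z.1) (p z.2) with hle | hle
    · have h0 : p z.1 - p z.2 = 0 := by omega
      rw [h0, Nat.mul_zero, Nat.zero_add]
      zify [ha, hb, hle]
      nlinarith [mul_nonneg (by exact_mod_cast Nat.zero_le (p z.1) : (0:ℤ) ≤ (p z.1 : ℤ))
        (by push_cast; omega : (0:ℤ) ≤ (n : ℤ) - (p z.2 : ℤ))]
    · have h0 : p z.2 - p z.1 = 0 := by omega
      rw [h0, Nat.mul_zero, Nat.add_zero]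
      zify [ha, hb, hle]
      nlinarith [mul_nonneg (by exact_mod_cast Nat.zero_le (p z.2) : (0:ℤ) ≤ (p z.2 : ℤ))
        (by push_cast; omega : (0:ℤ) ≤ (n : ℤ) - (p z.1 : ℤ))]
  have h5 : 2 * ∑ z ∈ auxOP G, (n * (p z.1 - p z.2)) ≤
      2 * ∑ z ∈ auxOP G, p z.1 * (n - p z.2) := by
    have hsw1 : ∑ z ∈ auxOP G, (n * (p z.1 - p z.2)) =
        ∑ z ∈ auxOP G, (n * (p z.2 - p z.1)) := aux_OP_swap G _
    have hsw2 : ∑ z ∈ auxOP G, p z.1 * (n - p z.2) =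
        ∑ z ∈ auxOP G, p z.2 * (n - p z.1) := aux_OP_swap G _
    calc 2 * ∑ z ∈ auxOP G, (n * (p z.1 - p z.2))
        = ∑ z ∈ auxOP G, (n * (p z.1 - p z.2) + n * (p z.2 - p z.1)) := by
          rw [Finset.sum_add_distrib, ← hsw1]
          ring
      _ ≤ ∑ z ∈ auxOP G, (p z.1 * (n - p z.2) + p z.2 * (n - p z.1)) :=
          Finset.sum_le_sum fun z _ => hpair z
      _ = 2 * ∑ z ∈ auxOP G, p z.1 * (n - p z.2) := by
          rw [Finset.sum_add_distrib, ← hsw2]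
          ring
  have hFeq : ∑ x : V, p x * ((n - p x) + ∑ y ∈ G.neighborFinset x, (n - p y)) =
      (∑ x : V, p x * (n - p x)) + ∑ z ∈ auxOP G, p z.1 * (n - p z.2) := by
    rw [aux_sum_OP G (fun x y => p x * (n - p y)), ← Finset.sum_add_distrib]
    refine Finset.sum_congr rfl fun x _ => ?_
    rw [mul_add, Finset.mul_sum]
  calc n ^ 2 * edgeConn G = n * (n * edgeConn G) := by ring
    _ ≤ n * (n * c t0) :=
        Nat.mul_le_mul_left _ (Nat.mul_le_mul_left _ (hcut t0 ht0))
    _ ≤ n * ∑ t ∈ Finset.Icc 1 n, c t := by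
        have := h4
        calc n * (n * c t0) = n * c t0 * n := by ring
          _ ≤ (∑ t ∈ Finset.Icc 1 n, c t) * n := Nat.mul_le_mul_right _ h4
          _ = n * ∑ t ∈ Finset.Icc 1 n, c t := by ring
    _ = ∑ z ∈ auxOP G, (n * (p z.1 - p z.2)) := by rw [h2, Finset.mul_sum]
    _ ≤ ∑ z ∈ auxOP G, p z.1 * (n - p z.2) := by omega
    _ ≤ _ := by rw [hFeq]; omega

lemma aux_minDeg_pos {V : Type*} [Fintype V] (G : SimpleGraph V) (hG : G.Connected)
    (h2 : 2 ≤ Fintype.card V) : 1 ≤ minDeg G := by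
  classical
  have hne : Nonempty V := Fintype.card_pos_iff.mp (by omega)
  obtain ⟨x0, hx0⟩ := aux_exists_minDeg G
  rw [hx0, aux_deg_eq_degree]
  by_contra h
  push_neg at h
  have h0 : G.neighborFinset x0 = ∅ := Finset.card_eq_zero.mp ((by omega : G.degree x0 = 0))
  obtain ⟨y, hy⟩ := Fintype.exists_ne_of_one_lt_card (by omega) x0
  have hcl : ∀ a ∈ ({x0} : Set V), ∀ b, G.Adj a b → b ∈ ({x0} : Set V) := by
    intro a ha b hab
    rw [Set.mem_singleton_iff] at ha
    subst ha
    exact absurd (SimpleGraph.mem_neighborFinset G a b |>.mpr hab) (by rw [h0]; simp)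
  exact aux_not_reachable hcl rfl (fun hmem => hy hmem) (hG.preconnected x0 y)

lemma aux_SP_deg_ge {V : Type*} [Fintype V] [DecidableEq V] (G : SimpleGraph V)
    [DecidableRel G.Adj] (n : ℕ) (v : V × Fin n) :
    n * minDeg G + (n - 1) ≤ deg (strongProd G (SimpleGraph.completeGraph (Fin n))) v := by
  obtain ⟨x, i⟩ := v
  rw [aux_SP_deg]
  refine Nat.add_le_add ?_ le_rfl
  refine Nat.mul_le_mul_left _ ?_
  rw [← aux_deg_eq_degree]
  exact aux_minDeg_le G x

lemma aux_restEdgeConn_le {V : Type*} [Fintype V] [DecidableEq V] (G : SimpleGraph V)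
    [DecidableRel G.Adj] (m n : ℕ) (hm : Fintype.card V = m) (hnt : 2 ≤ m)
    (hG : G.Connected) (hn : 4 ≤ n) :
    restEdgeConn (strongProd G (SimpleGraph.completeGraph (Fin n))) ≤ 2 * n * minDeg G + 2 * n - 4 := by
  classical
  set Γ := strongProd G (SimpleGraph.completeGraph (Fin n)) with hΓ
  have hVne : Nonempty V := Fintype.card_pos_iff.mp (by omega)
  obtain ⟨x0, hx0⟩ := aux_exists_minDeg G
  have hδ1 : 1 ≤ minDeg G := aux_minDeg_pos G hG (by omega)
  set u : V × Fin n := (x0, ⟨0, by omega⟩) with hu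
  set v : V × Fin n := (x0, ⟨1, by omega⟩) with hv
  have huv : u ≠ v := by
    rw [hu, hv]
    intro hh
    rw [Prod.mk.injEq, Fin.mk.injEq] at hh
    omega
  have hadjuv : Γ.Adj u v := by
    rw [hΓ, aux_SP_adj]
    left
    refine ⟨rfl, ?_⟩
    rw [hu, hv]
    intro hh
    rw [Fin.mk.injEq] at hh
    omega
  set T : Set (Sym2 (V × Fin n)) := (Γ.incidenceSet u ∪ Γ.incidenceSet v) \ {s(u, v)} with hT
  have hTsub : T ⊆ Γ.edgeSet := by
    intro e he
    rcases he.1 with h | h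
    · exact h.1
    · exact h.1
  have hsuvT : s(u, v) ∉ T := fun h => h.2 rfl
  have hcl : ∀ a ∈ ({u, v} : Set (V × Fin n)), ∀ b, (Γ.deleteEdges T).Adj a b →
      b ∈ ({u, v} : Set (V × Fin n)) := by
    intro a ha b hab
    rw [SimpleGraph.deleteEdges_adj] at hab
    by_contra hb
    apply hab.2
    rw [hT]
    refine ⟨?_, ?_⟩
    · rcases ha with rfl | ha
      · exact Or.inl ⟨(SimpleGraph.mem_edgeSet Γ).mpr hab.1, Sym2.mem_mk_left _ _⟩
      · rw [Set.mem_singleton_iff] at ha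
        subst ha
        exact Or.inr ⟨(SimpleGraph.mem_edgeSet Γ).mpr hab.1, Sym2.mem_mk_left _ _⟩
    · rw [Set.mem_singleton_iff]
      intro heq
      rcases Sym2.eq_iff.mp heq with ⟨h1, h2⟩ | ⟨h1, h2⟩
      · exact hb (h2 ▸ Set.mem_insert_iff.mpr (Or.inr rfl))
      · exact hb (h2 ▸ Set.mem_insert _ _)
  have hnotconn : ¬ (Γ.deleteEdges T).Connected := by
    obtain ⟨z, hz⟩ : ∃ z : V × Fin n, z ∉ ({u, v} : Set (V × Fin n)) := by
      by_contra hall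
      push_neg at hall
      have hsub : (univ : Finset (V × Fin n)) ⊆ {u, v} := by
        intro z _
        rcases hall z with rfl | hz2
        · exact Finset.mem_insert_self _ _
        · rw [Set.mem_singleton_iff] at hz2
          subst hz2
          exact Finset.mem_insert.mpr (Or.inr (Finset.mem_singleton_self _))
      have hcard := Finset.card_le_card hsub
      rw [Finset.card_univ, Fintype.card_prod, hm, Fintype.card_fin] at hcard
      have hc2 : ({u, v} : Finset (V × Fin n)).card ≤ 2 := Finset.card_insert_le _ _ |>.trans
        (by rw [Finset.card_singleton])
      have h8 : 2 * 4 ≤ m * n := Nat.mul_le_mul hnt hn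
      omega
    intro hc
    exact aux_not_reachable hcl (Set.mem_insert u _) hz (hc.preconnected u z)
  have hsupp2 : ∀ w : V × Fin n,
      2 ≤ (((Γ.deleteEdges T).connectedComponentMk w).supp).ncard := by
    intro w
    by_cases hw : w ∈ ({u, v} : Set (V × Fin n))
    · have hHadj : (Γ.deleteEdges T).Adj u v := by
        rw [SimpleGraph.deleteEdges_adj]
        exact ⟨hadjuv, hsuvT⟩
      have hpair : ({u, v} : Set (V × Fin n)) ⊆
          ((Γ.deleteEdges T).connectedComponentMk w).supp := by
        intro z hzp
        rw [SimpleGraph.ConnectedComponent.mem_supp_iff]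
        rcases hw with rfl | hw
        · rcases hzp with rfl | hzp
          · rfl
          · rw [Set.mem_singleton_iff] at hzp
            subst hzp
            exact SimpleGraph.ConnectedComponent.eq.mpr hHadj.symm.reachable
        · rw [Set.mem_singleton_iff] at hw
          subst hw
          rcases hzp with rfl | hzp
          · exact SimpleGraph.ConnectedComponent.eq.mpr hHadj.reachable
          · rw [Set.mem_singleton_iff] at hzp
            subst hzp
            rfl
      calc 2 = ({u, v} : Set (V × Fin n)).ncard := (Set.ncard_pair huv).symm
        _ ≤ _ := Set.ncard_le_ncard hpair (Set.toFinite _)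
    · obtain ⟨w', hw'adj, hw'uv⟩ : ∃ w', Γ.Adj w w' ∧ w' ∉ ({u, v} : Set (V × Fin n)) := by
        by_contra hno
        push_neg at hno
        have hsub : Γ.neighborSet w ⊆ ({u, v} : Set (V × Fin n)) := fun w' hmem => hno w' hmem
        have hle : deg Γ w ≤ 2 := by
          calc deg Γ w ≤ ({u, v} : Set (V × Fin n)).ncard :=
              Set.ncard_le_ncard hsub (Set.toFinite _)
            _ = 2 := Set.ncard_pair huv
        have hge := aux_SP_deg_ge G n w
        rw [← hΓ] at hge
        have h7 : 4 * 1 + (4 - 1) ≤ n * minDeg G + (n - 1) := by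
          refine Nat.add_le_add (Nat.mul_le_mul hn hδ1) (by omega)
        omega
      have hHadj : (Γ.deleteEdges T).Adj w w' := by
        rw [SimpleGraph.deleteEdges_adj]
        refine ⟨hw'adj, fun hmem => ?_⟩
        rw [hT] at hmem
        have huvw : u ∈ s(w, w') ∨ v ∈ s(w, w') := by
          rcases hmem.1 with h | h
          · exact Or.inl h.2
          · exact Or.inr h.2
        rcases huvw with h | h <;> rw [Sym2.mem_iff] at h
        · rcases h with rfl | rfl
          · exact hw (Set.mem_insert _ _)
          · exact hw'uv (Set.mem_insert _ _)
        · rcases h with rfl | rfl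
          · exact hw (Set.mem_insert_iff.mpr (Or.inr rfl))
          · exact hw'uv (Set.mem_insert_iff.mpr (Or.inr rfl))
      have hpair : ({w, w'} : Set (V × Fin n)) ⊆
          ((Γ.deleteEdges T).connectedComponentMk w).supp := by
        intro z hzp
        rw [SimpleGraph.ConnectedComponent.mem_supp_iff]
        rcases hzp with rfl | hzp
        · rfl
        · rw [Set.mem_singleton_iff] at hzp
          subst hzp
          exact SimpleGraph.ConnectedComponent.eq.mpr hHadj.symm.reachable
      calc 2 = ({w, w'} : Set (V × Fin n)).ncard := (Set.ncard_pair hw'adj.ne).symm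
        _ ≤ _ := Set.ncard_le_ncard hpair (Set.toFinite _)
  have hRC : IsRestrictedEdgeCut Γ T := ⟨hTsub, hnotconn, hsupp2⟩
  have hle : restEdgeConn Γ ≤ T.ncard := Nat.sInf_le ⟨T, hRC, rfl⟩
  -- count T
  have hIu : (Γ.incidenceSet u).ncard = n * minDeg G + (n - 1) := by
    rw [Set.ncard_eq_toFinset_card', Set.toFinset_card,
      SimpleGraph.card_incidenceSet_eq_degree, ← aux_deg_eq_degree, hΓ, hu, aux_SP_deg,
      ← aux_deg_eq_degree, ← hx0]
  have hIv : (Γ.incidenceSet v).ncard = n * minDeg G + (n - 1) := by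
    rw [Set.ncard_eq_toFinset_card', Set.toFinset_card,
      SimpleGraph.card_incidenceSet_eq_degree, ← aux_deg_eq_degree, hΓ, hv, aux_SP_deg,
      ← aux_deg_eq_degree, ← hx0]
  have hinter : Γ.incidenceSet u ∩ Γ.incidenceSet v = {s(u, v)} := by
    ext e
    constructor
    · rintro ⟨⟨he1, hue⟩, ⟨he2, hve⟩⟩
      exact (Sym2.mem_and_mem_iff huv).mp ⟨hue, hve⟩
    · rintro rfl
      exact ⟨⟨(SimpleGraph.mem_edgeSet Γ).mpr hadjuv, Sym2.mem_mk_left _ _⟩,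
        ⟨(SimpleGraph.mem_edgeSet Γ).mpr hadjuv, Sym2.mem_mk_right _ _⟩⟩
  have hunion : (Γ.incidenceSet u ∪ Γ.incidenceSet v).ncard + 1 =
      (n * minDeg G + (n - 1)) + (n * minDeg G + (n - 1)) := by
    have := Set.ncard_union_add_ncard_inter (Γ.incidenceSet u) (Γ.incidenceSet v)
      (Set.toFinite _) (Set.toFinite _)
    rw [hinter, Set.ncard_singleton, hIu, hIv] at this
    omega
  have hTcard : T.ncard + 1 = (Γ.incidenceSet u ∪ Γ.incidenceSet v).ncard := by
    rw [hT]
    rw [Set.ncard_diff_singleton_add_one ?_ (Set.toFinite _)]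
    exact Or.inl ⟨(SimpleGraph.mem_edgeSet Γ).mpr hadjuv, Sym2.mem_mk_left _ _⟩
  have hmul : 2 * n * minDeg G = 2 * (n * minDeg G) := by ring
  have hn1 : 1 ≤ n := by omega
  omega

end AuxHelpers

theorem superRestricted_strongProd_completeGraph {V : Type*} [Fintype V]
    (G : SimpleGraph V) (m n : ℕ) (hm : Fintype.card V = m) (hnt : 2 ≤ m)
    (hG : G.Connected) (hn : 4 ≤ n)
    (h : 2 * n * minDeg G + 2 * n - 4 <
      min (n ^ 2 * edgeConn G) ((n - 1) * (m + 2 * numEdges G))) :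
    SuperRestrictedEdgeConnected (strongProd G (SimpleGraph.completeGraph (Fin n))) := by
  classical
  intro S hS hmin
  by_contra hno
  push_neg at hno
  set Γ := strongProd G (SimpleGraph.completeGraph (Fin n)) with hΓ
  have hVne : Nonempty V := Fintype.card_pos_iff.mp (by omega)
  have hδ1 : 1 ≤ minDeg G := aux_minDeg_pos G hG (by omega)
  have hTle : restEdgeConn Γ ≤ 2 * n * minDeg G + 2 * n - 4 :=
    aux_restEdgeConn_le G m n hm hnt hG hn
  have hSle : S.ncard ≤ 2 * n * minDeg G + 2 * n - 4 := by rw [hmin]; exact hTle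
  obtain ⟨hlam, hsplit⟩ := lt_min_iff.mp h
  set K := n * (minDeg G + 1) with hK
  have hKeq : K = n * minDeg G + n := by rw [hK]; ring
  have hmul2 : 2 * n * minDeg G = 2 * (n * minDeg G) := by ring
  have hK8 : 8 ≤ K := by
    have : 4 * 2 ≤ n * (minDeg G + 1) := Nat.mul_le_mul hn (by omega)
    omega
  have hdegK : ∀ v : V × Fin n, K - 1 ≤ deg Γ v := by
    intro v
    have := aux_SP_deg_ge G n v
    rw [← hΓ] at this
    omega
  have hSle' : S.ncard ≤ 2 * K - 4 := by omega
  have hlarge : ∀ w : V × Fin n,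
      K - 2 ≤ ((Γ.deleteEdges S).connectedComponentMk w).supp.ncard := by
    intro w
    refine aux_supp_large Γ S K hK8 hdegK hSle' w ?_
    have h2 := hS.2.2 w
    have hne2 := hno w
    omega
  -- two components
  have hnotconn := hS.2.1
  haveI hne2 : Nonempty (V × Fin n) := ⟨(Classical.arbitrary V, ⟨0, by omega⟩)⟩
  have hnp : ¬ (Γ.deleteEdges S).Preconnected := by
    intro hp
    exact hnotconn ⟨hp⟩
  rw [SimpleGraph.Preconnected] at hnp
  push_neg at hnp
  obtain ⟨u0, z0, hnr⟩ := hnp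
  set X : Set (V × Fin n) := ((Γ.deleteEdges S).connectedComponentMk u0).supp with hX
  have hcutX : ∀ a ∈ X, ∀ b, b ∉ X → Γ.Adj a b → s(a, b) ∈ S := by
    intro a ha b hb hadj
    by_contra hs
    have hHadj : (Γ.deleteEdges S).Adj a b := by
      rw [SimpleGraph.deleteEdges_adj]
      exact ⟨hadj, hs⟩
    apply hb
    rw [hX, SimpleGraph.ConnectedComponent.mem_supp_iff] at ha ⊢
    rw [← ha]
    exact SimpleGraph.ConnectedComponent.eq.mpr hHadj.symm.reachable
  have hcutXc : ∀ a ∈ Xᶜ, ∀ b, b ∉ Xᶜ → Γ.Adj a b → s(a, b) ∈ S := by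
    intro a ha b hb hadj
    rw [Set.mem_compl_iff] at ha
    rw [Set.notMem_compl_iff] at hb
    rw [Sym2.eq_swap]
    exact hcutX b hb a ha hadj.symm
  have hq : ∀ x : V, (univ.filter fun j : Fin n => ((x, j) : V × Fin n) ∉ X).card =
      n - (univ.filter fun j : Fin n => ((x, j) : V × Fin n) ∈ X).card := by
    intro x
    have := Finset.card_filter_add_card_filter_not
      (s := (univ : Finset (Fin n))) (fun j : Fin n => ((x, j) : V × Fin n) ∈ X)
    rw [Finset.card_univ, Fintype.card_fin] at this
    omega
  have hpn : ∀ x : V, (univ.filter fun j : Fin n => ((x, j) : V × Fin n) ∈ X).card ≤ n := by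
    intro x
    have hh := Finset.card_filter_add_card_filter_not
      (s := (univ : Finset (Fin n))) (fun j : Fin n => ((x, j) : V × Fin n) ∈ X)
    rw [Finset.card_univ, Fintype.card_fin] at hh
    omega
  have hF1 := aux_main_count G n S X hcutX
  simp only [hq] at hF1
  have hF2 := aux_main_count G n S Xᶜ hcutXc
  simp only [Set.mem_compl_iff, not_not] at hF2
  simp only [hq] at hF2
  -- side sizes
  have hXfin : X.toFinset = univ.filter fun z : V × Fin n => z ∈ X := by
    ext z
    simp
  have hXcard : X.ncard =
      ∑ x : V, (univ.filter fun j : Fin n => ((x, j) : V × Fin n) ∈ X).card := by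
    rw [Set.ncard_eq_toFinset_card', hXfin, aux_card_filter_prod]
  have hXcfin : Xᶜ.toFinset = univ.filter fun z : V × Fin n => z ∉ X := by
    ext z
    simp
  have hXccard : Xᶜ.ncard =
      ∑ x : V, (n - (univ.filter fun j : Fin n => ((x, j) : V × Fin n) ∈ X).card) := by
    rw [Set.ncard_eq_toFinset_card', hXcfin, aux_card_filter_prod]
    exact Finset.sum_congr rfl fun x _ => hq x
  have hXbig : K - 2 ≤ ∑ x : V, (univ.filter fun j : Fin n => ((x, j) : V × Fin n) ∈ X).card := by
    rw [← hXcard, hX]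
    exact hlarge u0
  have hXcbig : K - 2 ≤
      ∑ x : V, (n - (univ.filter fun j : Fin n => ((x, j) : V × Fin n) ∈ X).card) := by
    rw [← hXccard]
    have hsubz : ((Γ.deleteEdges S).connectedComponentMk z0).supp ⊆ Xᶜ := by
      intro y hy
      rw [SimpleGraph.ConnectedComponent.mem_supp_iff] at hy
      rw [Set.mem_compl_iff]
      intro hyX
      rw [hX, SimpleGraph.ConnectedComponent.mem_supp_iff] at hyX
      exact hnr (SimpleGraph.ConnectedComponent.eq.mp (hyX.symm.trans hy))
    calc K - 2 ≤ ((Γ.deleteEdges S).connectedComponentMk z0).supp.ncard := hlarge z0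
      _ ≤ Xᶜ.ncard := Set.ncard_le_ncard hsubz (Set.toFinite _)
  -- case analysis
  by_cases hA : ∃ x : V, (univ.filter fun j : Fin n => ((x, j) : V × Fin n) ∈ X).card = n
  · by_cases hB : ∃ x : V, (univ.filter fun j : Fin n => ((x, j) : V × Fin n) ∈ X).card = 0
    · -- threshold case
      have hth := aux_threshold G n hn
        (fun x => (univ.filter fun j : Fin n => ((x, j) : V × Fin n) ∈ X).card) hpn hA hB
      have hchain := le_trans hth hF1
      omega
    · -- B empty, A nonempty : complement side
      push_neg at hB
      have hrn : ∀ x : V,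
          n - (univ.filter fun j : Fin n => ((x, j) : V × Fin n) ∈ X).card < n := by
        intro x
        have h1 := hpn x
        have h2 := hB x
        omega
      obtain ⟨xA, hxA⟩ := hA
      have hside := aux_side G hG n hn hδ1
        (fun x => n - (univ.filter fun j : Fin n => ((x, j) : V × Fin n) ∈ X).card)
        hrn ⟨xA, by
          show n - (univ.filter fun j : Fin n => ((xA, j) : V × Fin n) ∈ X).card = 0
          rw [hxA]
          omega⟩ (by rw [← hK]; exact hXcbig)
      have hnn : ∀ x : V,
          n - (n - (univ.filter fun j : Fin n => ((x, j) : V × Fin n) ∈ X).card) =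
          (univ.filter fun j : Fin n => ((x, j) : V × Fin n) ∈ X).card := by
        intro x
        have := hpn x
        omega
      simp only [hnn] at hside
      omega
  · by_cases hB : ∃ x : V, (univ.filter fun j : Fin n => ((x, j) : V × Fin n) ∈ X).card = 0
    · -- A empty, B nonempty : X side
      push_neg at hA
      have hrn : ∀ x : V, (univ.filter fun j : Fin n => ((x, j) : V × Fin n) ∈ X).card < n := by
        intro x
        have h1 := hpn x
        have h2 := hA x
        omega
      have hside := aux_side G hG n hn hδ1
        (fun x => (univ.filter fun j : Fin n => ((x, j) : V × Fin n) ∈ X).card)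
        hrn hB (by rw [← hK]; exact hXbig)
      omega
    · -- all split
      push_neg at hA
      push_neg at hB
      have h1 : ∀ x : V, 1 ≤ (univ.filter fun j : Fin n => ((x, j) : V × Fin n) ∈ X).card := by
        intro x
        have := hB x
        omega
      have h2 : ∀ x : V,
          (univ.filter fun j : Fin n => ((x, j) : V × Fin n) ∈ X).card ≤ n - 1 := by
        intro x
        have h3 := hpn x
        have h4 := hA x
        omega
      have hsp := aux_split G n hn
        (fun x => (univ.filter fun j : Fin n => ((x, j) : V × Fin n) ∈ X).card) h1 h2
      rw [hm] at hsp
      have hchain := le_trans hsp hF1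
      omega
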